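/- arXiv:2311.14885 — 4 statements merged into one kernel-verified Lean document; each statement's English description precedes it below -/
import Mathlib

section
/- Let the projected Bellman operator be Π_μ∘𝓑 where 𝓑(x) = R + γPx. Then the block matrix F_μ = [[ΦᵀD_μΦ, ΦᵀD_μPΦ], [ΦᵀPᵀD_μΦ, ΦᵀD_μΦ]] is positive semidefinite if and only if the projected Bellman operator is a γ-contraction on the column space of Φ in the μ-weighted norm, i.e. for all w₁, w₂ ∈ ℝᵏ, ‖Π_μ𝓑(Φw₁) − Π_μ𝓑(Φw₂)‖_μ ≤ γ‖Φw₁ − Φw₂‖_μ. -/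
open Matrix

noncomputable section

/-- The μ-weighted norm `‖x‖_μ = (∑ s, μ s * x s ^ 2)^{1/2}`. -/
def wnorm {n : ℕ} (μ : Fin n → ℝ) (x : Fin n → ℝ) : ℝ :=
  Real.sqrt (∑ s, μ s * (x s) ^ 2)

lemma qform {m k : ℕ} (M : Matrix (Fin m) (Fin m) ℝ) (C : Matrix (Fin m) (Fin k) ℝ)
    (v : Fin k → ℝ) :
    (C *ᵥ v) ⬝ᵥ (M *ᵥ (C *ᵥ v)) = v ⬝ᵥ ((Cᵀ * M * C) *ᵥ v) := by
  rw [dotProduct_mulVec, dotProduct_mulVec, vecMul_vecMul, vecMul_mulVec,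
    Matrix.mul_assoc, ← dotProduct_mulVec]

lemma diag_quad {n : ℕ} (μ : Fin n → ℝ) (x : Fin n → ℝ) :
    x ⬝ᵥ ((Matrix.diagonal μ) *ᵥ x) = ∑ s, μ s * (x s) ^ 2 := by
  simp [dotProduct, mulVec_diagonal]
  congr 1; ext s; ring

lemma wnorm_eq {n : ℕ} (μ : Fin n → ℝ) (x : Fin n → ℝ) :
    wnorm μ x = Real.sqrt (x ⬝ᵥ ((Matrix.diagonal μ) *ᵥ x)) := by
  rw [wnorm, diag_quad]

lemma wnorm_smul {n : ℕ} (μ : Fin n → ℝ) (c : ℝ) (x : Fin n → ℝ) :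
    wnorm μ (c • x) = |c| * wnorm μ x := by
  unfold wnorm
  rw [← Real.sqrt_sq_eq_abs, ← Real.sqrt_mul (sq_nonneg c)]
  congr 1
  rw [Finset.mul_sum]
  refine Finset.sum_congr rfl fun s _ => ?_
  simp [Pi.smul_apply, smul_eq_mul]; ring

/-- the block matrix `F_μ` is positive semidefinite iff the projected
Bellman operator `Π_μ ∘ 𝓑` is a γ-contraction on the column space of Φ in `‖·‖_μ`. -/
theorem stmt0 (n k : ℕ)
    (P : Matrix (Fin n) (Fin n) ℝ)
    (hP0 : ∀ i j, 0 ≤ P i j) (hP1 : ∀ i, ∑ j, P i j = 1)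
    (R : Fin n → ℝ) (γ : ℝ) (hγ0 : 0 < γ) (hγ1 : γ < 1)
    (Φ : Matrix (Fin n) (Fin k) ℝ) (hΦ : Function.Injective Φ.mulVec)
    (μ : Fin n → ℝ) (hμ0 : ∀ s, 0 < μ s) (hμ1 : ∑ s, μ s = 1)
    (D : Matrix (Fin n) (Fin n) ℝ) (hD : D = Matrix.diagonal μ)
    (Proj : Matrix (Fin n) (Fin n) ℝ)
    (hProj : Proj = Φ * (Φᵀ * D * Φ)⁻¹ * Φᵀ * D)
    (Bop : (Fin n → ℝ) → (Fin n → ℝ))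
    (hBop : ∀ x, Bop x = R + γ • P.mulVec x) :
    (Matrix.fromBlocks (Φᵀ * D * Φ) (Φᵀ * D * P * Φ)
        (Φᵀ * Pᵀ * D * Φ) (Φᵀ * D * Φ)).PosSemidef
      ↔ ∀ w₁ w₂ : Fin k → ℝ,
          wnorm μ (Proj.mulVec (Bop (Φ.mulVec w₁)) - Proj.mulVec (Bop (Φ.mulVec w₂)))
            ≤ γ * wnorm μ (Φ.mulVec w₁ - Φ.mulVec w₂) := by
  subst hD hProj
  set Dμ : Matrix (Fin n) (Fin n) ℝ := Matrix.diagonal μ with hDμ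
  set A : Matrix (Fin k) (Fin k) ℝ := Φᵀ * Dμ * Φ with hA'
  set B : Matrix (Fin k) (Fin k) ℝ := Φᵀ * Dμ * P * Φ with hB'
  -- A is positive definite
  have hDμT : Dμᵀ = Dμ := Matrix.diagonal_transpose μ
  have hAT : Aᵀ = A := by
    rw [hA', Matrix.transpose_mul, Matrix.transpose_mul, hDμT, Matrix.transpose_transpose,
      Matrix.mul_assoc]
  have hAherm : A.IsHermitian := by
    rw [Matrix.IsHermitian, conjTranspose_eq_transpose_of_trivial, hAT]
  have hquadA : ∀ v : Fin k → ℝ, v ⬝ᵥ (A *ᵥ v) = ∑ s, μ s * ((Φ *ᵥ v) s) ^ 2 := by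
    intro v
    rw [hA', ← qform, diag_quad]
  have hA : A.PosDef := by
    refine Matrix.posDef_iff_dotProduct_mulVec.mpr ⟨hAherm, fun x hx => ?_⟩
    have hstar : star x = x := by simp
    rw [hstar, hquadA]
    have hΦx : Φ *ᵥ x ≠ 0 := by
      intro hc
      exact hx (hΦ (by simpa using hc))
    obtain ⟨s, hs⟩ := Function.ne_iff.mp hΦx
    refine Finset.sum_pos' (fun i _ => ?_) ⟨s, Finset.mem_univ s, ?_⟩
    · exact mul_nonneg (hμ0 i).le (sq_nonneg _)
    · refine mul_pos (hμ0 s) ?_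
      have hs' : (Φ *ᵥ x) s ≠ 0 := by simpa using hs
      positivity
  haveI : Invertible A := A.invertibleOfIsUnitDet hA.det_pos.ne'.isUnit
  have hAinvT : A⁻¹ᵀ = A⁻¹ := by
    rw [Matrix.transpose_nonsing_inv, hAT]
  -- the lower-left block is Bᴴ
  have hBH : Bᴴ = Bᵀ := conjTranspose_eq_transpose_of_trivial B
  have hblock : Φᵀ * Pᵀ * Dμ * Φ = Bᴴ := by
    rw [hBH, hB', Matrix.transpose_mul, Matrix.transpose_mul, Matrix.transpose_mul,
      hDμT, Matrix.transpose_transpose, Matrix.mul_assoc, Matrix.mul_assoc]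
  -- Schur complement reduction
  rw [hblock, Matrix.PosDef.fromBlocks₁₁ B A hA]
  -- identity for the Schur complement quadratic form
  have hident : (A⁻¹ * B)ᵀ * A * (A⁻¹ * B) = Bᴴ * A⁻¹ * B := by
    rw [hBH, Matrix.transpose_mul, hAinvT, Matrix.mul_assoc, Matrix.mul_assoc,
      Matrix.mul_inv_cancel_left_of_invertible, ← Matrix.mul_assoc]
  have hquadS : ∀ v : Fin k → ℝ,
      v ⬝ᵥ ((Bᴴ * A⁻¹ * B) *ᵥ v) = ∑ s, μ s * ((Φ *ᵥ ((A⁻¹ * B) *ᵥ v)) s) ^ 2 := by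
    intro v
    rw [← hident, ← qform, ← hquadA, qform]
  -- difference of projected Bellman images
  have hdiff : ∀ w₁ w₂ : Fin k → ℝ,
      (Φ * A⁻¹ * Φᵀ * Dμ) *ᵥ (Bop (Φ *ᵥ w₁)) - (Φ * A⁻¹ * Φᵀ * Dμ) *ᵥ (Bop (Φ *ᵥ w₂))
        = γ • (Φ *ᵥ ((A⁻¹ * B) *ᵥ (w₁ - w₂))) := by
    intro w₁ w₂
    rw [hBop, hBop, Matrix.mulVec_add, Matrix.mulVec_add]
    have hPPΦ : Φ * A⁻¹ * Φᵀ * Dμ * P * Φ = Φ * (A⁻¹ * B) := by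
      rw [hB']
      simp [Matrix.mul_assoc]
    have h1 : ∀ w : Fin k → ℝ,
        (Φ * A⁻¹ * Φᵀ * Dμ) *ᵥ (γ • (P *ᵥ (Φ *ᵥ w))) = γ • (Φ *ᵥ ((A⁻¹ * B) *ᵥ w)) := by
      intro w
      rw [Matrix.mulVec_smul, Matrix.mulVec_mulVec, Matrix.mulVec_mulVec, hPPΦ,
        ← Matrix.mulVec_mulVec]
    rw [h1, h1, Matrix.mulVec_sub, Matrix.mulVec_sub]
    module
  -- per-pair equivalence
  have key : ∀ w₁ w₂ : Fin k → ℝ,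
      (wnorm μ ((Φ * A⁻¹ * Φᵀ * Dμ) *ᵥ (Bop (Φ *ᵥ w₁)) - (Φ * A⁻¹ * Φᵀ * Dμ) *ᵥ (Bop (Φ *ᵥ w₂)))
          ≤ γ * wnorm μ (Φ *ᵥ w₁ - Φ *ᵥ w₂))
        ↔ (w₁ - w₂) ⬝ᵥ ((Bᴴ * A⁻¹ * B) *ᵥ (w₁ - w₂)) ≤ (w₁ - w₂) ⬝ᵥ (A *ᵥ (w₁ - w₂)) := by
    intro w₁ w₂
    have hsub : Φ *ᵥ w₁ - Φ *ᵥ w₂ = Φ *ᵥ (w₁ - w₂) := by rw [Matrix.mulVec_sub]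
    rw [hdiff, hsub, wnorm_smul, abs_of_pos hγ0, mul_le_mul_iff_right₀ hγ0]
    unfold wnorm
    rw [← hquadS, ← hquadA]
    have h1 : 0 ≤ (w₁ - w₂) ⬝ᵥ ((Bᴴ * A⁻¹ * B) *ᵥ (w₁ - w₂)) := by
      rw [hquadS]
      exact Finset.sum_nonneg fun s _ => mul_nonneg (hμ0 s).le (sq_nonneg _)
    have h2 : 0 ≤ (w₁ - w₂) ⬝ᵥ (A *ᵥ (w₁ - w₂)) := by
      rw [hquadA]
      exact Finset.sum_nonneg fun s _ => mul_nonneg (hμ0 s).le (sq_nonneg _)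
    constructor
    · intro h
      exact (Real.sqrt_le_sqrt_iff h2).mp h
    · intro h
      exact Real.sqrt_le_sqrt h
  constructor
  · intro h w₁ w₂
    rw [key]
    have h2 := (Matrix.posSemidef_iff_dotProduct_mulVec.mp h).2 (w₁ - w₂)
    have hstar : star (w₁ - w₂) = w₁ - w₂ := by simp
    rw [hstar, Matrix.sub_mulVec, dotProduct_sub, sub_nonneg] at h2
    exact h2
  · intro h
    rw [Matrix.posSemidef_iff_dotProduct_mulVec]
    constructor
    · have hBABherm : (Bᴴ * A⁻¹ * B).IsHermitian :=
        Matrix.isHermitian_conjTranspose_mul_mul B hAherm.inv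
      exact hAherm.sub hBABherm
    · intro x
      have hx := (key x 0).mp (h x 0)
      have hstar : star x = x := by simp
      rw [sub_zero] at hx
      rw [hstar, Matrix.sub_mulVec, dotProduct_sub, sub_nonneg]
      exact hx
end
end

section
/- Suppose the block matrix F_μ = [[ΦᵀD_μΦ, ΦᵀD_μPΦ], [ΦᵀPᵀD_μΦ, ΦᵀD_μΦ]] is positive semidefinite. Then there exists a unique vector V̄ in the column space of Φ satisfying the projected Bellman equation V̄ = Π_μ(R + γPV̄), and this V̄ can be written as Φw⋆ for a unique w⋆ ∈ ℝᵏ. -/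
open Matrix

noncomputable section

/-- if `F_μ ⪰ 0` then there is a unique `V̄` in the column space of `Φ`
satisfying the projected Bellman equation `V̄ = Π_μ(R + γPV̄)`, and `V̄ = Φw⋆` for a
unique `w⋆`. -/
theorem stmt4 (n k : ℕ)
    (P : Matrix (Fin n) (Fin n) ℝ)
    (hP0 : ∀ i j, 0 ≤ P i j) (hP1 : ∀ i, ∑ j, P i j = 1)
    (R : Fin n → ℝ) (γ : ℝ) (hγ0 : 0 < γ) (hγ1 : γ < 1)
    (Φ : Matrix (Fin n) (Fin k) ℝ) (hΦ : Function.Injective Φ.mulVec)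
    (μ : Fin n → ℝ) (hμ0 : ∀ s, 0 < μ s) (hμ1 : ∑ s, μ s = 1)
    (D : Matrix (Fin n) (Fin n) ℝ) (hD : D = Matrix.diagonal μ)
    (Proj : Matrix (Fin n) (Fin n) ℝ)
    (hProj : Proj = Φ * (Φᵀ * D * Φ)⁻¹ * Φᵀ * D)
    (hF : (Matrix.fromBlocks (Φᵀ * D * Φ) (Φᵀ * D * P * Φ)
        (Φᵀ * Pᵀ * D * Φ) (Φᵀ * D * Φ)).PosSemidef) :
    (∃! V : Fin n → ℝ, (∃ w : Fin k → ℝ, V = Φ.mulVec w) ∧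
        V = Proj.mulVec (R + γ • P.mulVec V))
    ∧ (∃! w : Fin k → ℝ,
        Φ.mulVec w = Proj.mulVec (R + γ • P.mulVec (Φ.mulVec w))) := by
  set M : Matrix (Fin k) (Fin k) ℝ := Φᵀ * D * Φ with hM
  set N : Matrix (Fin k) (Fin k) ℝ := Φᵀ * D * P * Φ with hN
  set A : Matrix (Fin k) (Fin k) ℝ := M - γ • N with hA
  -- quadratic form of M
  have hMq : ∀ x : Fin k → ℝ, x ⬝ᵥ M.mulVec x = ∑ s, μ s * (Φ.mulVec x s) ^ 2 := by
    intro x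
    rw [hM, hD]
    rw [Matrix.mul_assoc, ← Matrix.mulVec_mulVec, Matrix.dotProduct_mulVec,
      Matrix.vecMul_transpose, ← Matrix.mulVec_mulVec]
    simp only [Matrix.mulVec_diagonal, dotProduct]
    exact Finset.sum_congr rfl fun s _ => by ring
  -- M positive: x M x > 0 for x ≠ 0
  have hMpos : ∀ x : Fin k → ℝ, x ≠ 0 → 0 < x ⬝ᵥ M.mulVec x := by
    intro x hx
    rw [hMq]
    have hΦx : Φ.mulVec x ≠ 0 := by
      intro h
      apply hx
      apply hΦ
      rw [h, Matrix.mulVec_zero]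
    obtain ⟨s, hs⟩ := Function.ne_iff.mp hΦx
    apply Finset.sum_pos' (fun t _ => mul_nonneg (hμ0 t).le (sq_nonneg _))
    exact ⟨s, Finset.mem_univ s, mul_pos (hμ0 s)
      (lt_of_le_of_ne (sq_nonneg _) (Ne.symm (pow_ne_zero 2 hs)))⟩
  -- cross: x N x ≤ x M x from PSD
  have hkey : ∀ x : Fin k → ℝ, x ⬝ᵥ N.mulVec x ≤ x ⬝ᵥ M.mulVec x := by
    intro x
    have hDT : Dᵀ = D := by rw [hD, Matrix.diagonal_transpose]
    have hNT : Φᵀ * Pᵀ * D * Φ = Nᵀ := by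
      rw [hN, Matrix.transpose_mul, Matrix.transpose_mul, Matrix.transpose_mul,
        Matrix.transpose_transpose, hDT]
      simp [Matrix.mul_assoc]
    have h := hF.dotProduct_mulVec_nonneg (Sum.elim x (-x))
    rw [Matrix.fromBlocks_mulVec, hNT] at h
    simp only [star_trivial, Sum.elim_comp_inl, Sum.elim_comp_inr,
      sumElim_dotProduct_sumElim, Matrix.mulVec_neg, Matrix.mulVec_add,
      dotProduct_add, dotProduct_neg, neg_dotProduct, neg_neg,
      RCLike.re_to_real] at h
    have h2 : x ⬝ᵥ Nᵀ.mulVec x = x ⬝ᵥ N.mulVec x := by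
      rw [Matrix.dotProduct_mulVec, Matrix.vecMul_transpose, dotProduct_comm,
        Matrix.dotProduct_mulVec]
    rw [h2] at h
    linarith
  -- A is positive (not nec. symmetric)
  have hApos : ∀ x : Fin k → ℝ, x ≠ 0 → 0 < x ⬝ᵥ A.mulVec x := by
    intro x hx
    have h1 := hMpos x hx
    have h2 := hkey x
    rw [hA, Matrix.sub_mulVec, dotProduct_sub, Matrix.smul_mulVec,
      dotProduct_smul, smul_eq_mul]
    nlinarith
  -- A invertible
  have hAinj : Function.Injective A.mulVec := by
    intro x y hxy
    by_contra hne
    have hz : x - y ≠ 0 := sub_ne_zero.mpr hne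
    have := hApos (x - y) hz
    rw [Matrix.mulVec_sub, hxy, sub_self, dotProduct_zero] at this
    exact lt_irrefl 0 this
  have hAunit : IsUnit A := Matrix.mulVec_injective_iff_isUnit.mp hAinj
  have hAdet : IsUnit A.det := Matrix.isUnit_iff_isUnit_det A |>.mp hAunit
  -- M invertible
  have hMinj : Function.Injective M.mulVec := by
    intro x y hxy
    by_contra hne
    have hz : x - y ≠ 0 := sub_ne_zero.mpr hne
    have := hMpos (x - y) hz
    rw [Matrix.mulVec_sub, hxy, sub_self, dotProduct_zero] at this
    exact lt_irrefl 0 this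
  have hMdet : IsUnit M.det := Matrix.isUnit_iff_isUnit_det M |>.mp
    (Matrix.mulVec_injective_iff_isUnit.mp hMinj)
  -- the key equivalence
  have hequiv : ∀ w : Fin k → ℝ,
      (Φ.mulVec w = Proj.mulVec (R + γ • P.mulVec (Φ.mulVec w))) ↔
        A.mulVec w = (Φᵀ * D).mulVec R := by
    intro w
    rw [hProj]
    have hv : (Φᵀ * D).mulVec (R + γ • P.mulVec (Φ.mulVec w))
        = (Φᵀ * D).mulVec R + γ • N.mulVec w := by
      rw [Matrix.mulVec_add, Matrix.mulVec_smul, hN, Matrix.mulVec_mulVec,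
        Matrix.mulVec_mulVec]
    have hsplit : (Φ * M⁻¹ * Φᵀ * D).mulVec (R + γ • P.mulVec (Φ.mulVec w)) =
        Φ.mulVec (M⁻¹.mulVec ((Φᵀ * D).mulVec R + γ • N.mulVec w)) := by
      rw [show Φ * M⁻¹ * Φᵀ * D = Φ * (M⁻¹ * (Φᵀ * D)) from by
          rw [Matrix.mul_assoc, Matrix.mul_assoc],
        ← Matrix.mulVec_mulVec, ← Matrix.mulVec_mulVec, hv]
    rw [hsplit]
    constructor
    · intro h
      have hw : w = M⁻¹.mulVec ((Φᵀ * D).mulVec R + γ • N.mulVec w) := hΦ h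
      have hMw : M.mulVec w = (Φᵀ * D).mulVec R + γ • N.mulVec w := by
        conv_lhs => rw [hw]
        rw [Matrix.mulVec_mulVec, Matrix.mul_nonsing_inv M hMdet, Matrix.one_mulVec]
      rw [hA, Matrix.sub_mulVec, Matrix.smul_mulVec, hMw, add_sub_cancel_right]
    · intro h
      have hMw : M.mulVec w = (Φᵀ * D).mulVec R + γ • N.mulVec w := by
        have h2 : M.mulVec w - γ • N.mulVec w = (Φᵀ * D).mulVec R := by
          rw [← h, hA, Matrix.sub_mulVec, Matrix.smul_mulVec]
        exact sub_eq_iff_eq_add.mp h2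
      have hw : w = M⁻¹.mulVec ((Φᵀ * D).mulVec R + γ • N.mulVec w) := by
        rw [← hMw, Matrix.mulVec_mulVec, Matrix.nonsing_inv_mul M hMdet, Matrix.one_mulVec]
      rw [← hw]
  -- solve
  set w₀ : Fin k → ℝ := A⁻¹.mulVec ((Φᵀ * D).mulVec R) with hw₀
  have hw₀sol : A.mulVec w₀ = (Φᵀ * D).mulVec R := by
    rw [hw₀, Matrix.mulVec_mulVec, Matrix.mul_nonsing_inv A hAdet, Matrix.one_mulVec]
  have hwuniq : ∀ w : Fin k → ℝ, A.mulVec w = (Φᵀ * D).mulVec R → w = w₀ := by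
    intro w hw
    exact hAinj (by rw [hw, hw₀sol])
  constructor
  · refine ⟨Φ.mulVec w₀, ⟨⟨w₀, rfl⟩, (hequiv w₀).mpr hw₀sol⟩, ?_⟩
    rintro V ⟨⟨w, rfl⟩, hVeq⟩
    rw [hwuniq w ((hequiv w).mp hVeq)]
  · refine ⟨w₀, (hequiv w₀).mpr hw₀sol, fun w hw => hwuniq w ((hequiv w).mp hw)⟩
end
end

section
/- Suppose μ satisfies the contraction mapping condition, i.e. the block matrix F_μ = [[ΦᵀD_μΦ, ΦᵀD_μPΦ], [ΦᵀPᵀD_μΦ, ΦᵀD_μΦ]] is positive semidefinite, and let ν be a stationary distribution of P (νᵀP = νᵀ) with ν(s) > 0 for all s. Let V ∈ ℝⁿ be the unique solution of the Bellman equation V = R + γPV, and let w⋆ ∈ ℝᵏ satisfy the projected fixed-point equation Φw⋆ = Π_μ(R + γPΦw⋆). Then ‖Φw⋆ − V‖_μ ≤ ((1 + γ√δ(ν,μ))/(1 − γ)) · ‖Π_μV − V‖_μ, where δ(ν,μ) = max over pairs of states s, s̃ of (ν(s)/μ(s))·(μ(s̃)/ν(s̃)), and ‖Π_μV − V‖_μ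 = min_{w ∈ ℝᵏ} ‖Φw − V‖_μ. -/
open Matrix

noncomputable section

/-- weighted inner product -/
def wip {n : ℕ} (μ : Fin n → ℝ) (x y : Fin n → ℝ) : ℝ := ∑ s, μ s * x s * y s

lemma wip_comm {n : ℕ} (μ x y : Fin n → ℝ) : wip μ x y = wip μ y x := by
  unfold wip; exact Finset.sum_congr rfl fun s _ => by ring

lemma wip_add_right {n : ℕ} (μ x y z : Fin n → ℝ) :
    wip μ x (y + z) = wip μ x y + wip μ x z := by
  unfold wip; rw [← Finset.sum_add_distrib]
  exact Finset.sum_congr rfl fun s _ => by simp [Pi.add_apply]; ring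

lemma wip_smul_right {n : ℕ} (μ x y : Fin n → ℝ) (c : ℝ) :
    wip μ x (c • y) = c * wip μ x y := by
  unfold wip; rw [Finset.mul_sum]
  exact Finset.sum_congr rfl fun s _ => by simp [Pi.smul_apply]; ring

lemma wip_self_nonneg {n : ℕ} {μ : Fin n → ℝ} (hμ : ∀ s, 0 ≤ μ s) (x : Fin n → ℝ) :
    0 ≤ wip μ x x :=
  Finset.sum_nonneg fun s _ => by nlinarith [hμ s, sq_nonneg (x s)]

lemma wnorm_eq_sqrt_wip {n : ℕ} (μ x : Fin n → ℝ) :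
    wnorm μ x = Real.sqrt (wip μ x x) := by
  unfold wnorm wip
  congr 1
  exact Finset.sum_congr rfl fun s _ => by ring

lemma wnorm_nonneg {n : ℕ} (μ x : Fin n → ℝ) : 0 ≤ wnorm μ x := Real.sqrt_nonneg _

lemma sq_wnorm {n : ℕ} {μ : Fin n → ℝ} (hμ : ∀ s, 0 ≤ μ s) (x : Fin n → ℝ) :
    wnorm μ x ^ 2 = wip μ x x := by
  rw [wnorm_eq_sqrt_wip, Real.sq_sqrt (wip_self_nonneg hμ x)]

/-- Cauchy–Schwarz for the weighted inner product. -/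
lemma wip_le {n : ℕ} {μ : Fin n → ℝ} (hμ : ∀ s, 0 ≤ μ s) (x y : Fin n → ℝ) :
    wip μ x y ≤ wnorm μ x * wnorm μ y := by
  have key : (wip μ x y) ^ 2 ≤ (wip μ x x) * (wip μ y y) := by
    have h := Finset.sum_mul_sq_le_sq_mul_sq Finset.univ
      (fun s => Real.sqrt (μ s) * x s) (fun s => Real.sqrt (μ s) * y s)
    have e1 : ∀ s : Fin n, (Real.sqrt (μ s) * x s) * (Real.sqrt (μ s) * y s) = μ s * x s * y s := by
      intro s
      rw [mul_mul_mul_comm, Real.mul_self_sqrt (hμ s), mul_assoc]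
    have e2 : ∀ s : Fin n, (Real.sqrt (μ s) * x s) ^ 2 = μ s * x s * x s := by
      intro s
      rw [mul_pow, Real.sq_sqrt (hμ s)]; ring
    have e3 : ∀ s : Fin n, (Real.sqrt (μ s) * y s) ^ 2 = μ s * y s * y s := by
      intro s
      rw [mul_pow, Real.sq_sqrt (hμ s)]; ring
    simpa [wip, Finset.sum_congr rfl (fun s _ => e1 s),
      Finset.sum_congr rfl (fun s _ => e2 s), Finset.sum_congr rfl (fun s _ => e3 s)] using h
  calc wip μ x y ≤ |wip μ x y| := le_abs_self _
    _ = Real.sqrt ((wip μ x y) ^ 2) := (Real.sqrt_sq_eq_abs _).symm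
    _ ≤ Real.sqrt ((wip μ x x) * (wip μ y y)) := Real.sqrt_le_sqrt key
    _ = Real.sqrt (wip μ x x) * Real.sqrt (wip μ y y) :=
        Real.sqrt_mul (wip_self_nonneg hμ x) _
    _ = wnorm μ x * wnorm μ y := by rw [wnorm_eq_sqrt_wip, wnorm_eq_sqrt_wip]

lemma wnorm_add_le {n : ℕ} {μ : Fin n → ℝ} (hμ : ∀ s, 0 ≤ μ s) (x y : Fin n → ℝ) :
    wnorm μ (x + y) ≤ wnorm μ x + wnorm μ y := by
  have h1 : wip μ (x + y) (x + y) = wip μ x x + 2 * wip μ x y + wip μ y y := by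
    rw [wip_add_right, wip_comm μ (x+y) x, wip_comm μ (x+y) y, wip_add_right, wip_add_right,
      wip_comm μ x y]
    ring
  have h2 : wip μ (x + y) (x + y) ≤ (wnorm μ x + wnorm μ y) ^ 2 := by
    rw [h1]
    have := wip_le hμ x y
    have hx := sq_wnorm hμ x
    have hy := sq_wnorm hμ y
    nlinarith
  rw [wnorm_eq_sqrt_wip]
  calc Real.sqrt (wip μ (x+y) (x+y)) ≤ Real.sqrt ((wnorm μ x + wnorm μ y) ^ 2) :=
        Real.sqrt_le_sqrt h2
    _ = wnorm μ x + wnorm μ y := by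
        exact Real.sqrt_sq (add_nonneg (wnorm_nonneg _ _) (wnorm_nonneg _ _))

lemma wip_eq_dot {n : ℕ} (μ x y : Fin n → ℝ) :
    wip μ x y = x ⬝ᵥ (Matrix.diagonal μ *ᵥ y) := by
  unfold wip dotProduct
  exact Finset.sum_congr rfl fun s _ => by rw [Matrix.mulVec_diagonal]; ring

lemma dot_swap {n m : ℕ} (M : Matrix (Fin n) (Fin m) ℝ) (x : Fin m → ℝ) (y : Fin n → ℝ) :
    (M *ᵥ x) ⬝ᵥ y = x ⬝ᵥ (Mᵀ *ᵥ y) := by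
  rw [Matrix.dotProduct_mulVec, Matrix.vecMul_transpose]

/-- approximation-error bound for the TD fixed point under the
contraction mapping condition `F_μ ⪰ 0`:
`‖Φw⋆ − V‖_μ ≤ ((1 + γ√δ(ν,μ))/(1 − γ)) · ‖Π_μV − V‖_μ`. -/
theorem stmt5 (n k : ℕ)
    (P : Matrix (Fin n) (Fin n) ℝ)
    (hP0 : ∀ i j, 0 ≤ P i j) (hP1 : ∀ i, ∑ j, P i j = 1)
    (R : Fin n → ℝ) (γ : ℝ) (hγ0 : 0 < γ) (hγ1 : γ < 1)
    (Φ : Matrix (Fin n) (Fin k) ℝ) (hΦ : Function.Injective Φ.mulVec)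
    (μ : Fin n → ℝ) (hμ0 : ∀ s, 0 < μ s) (hμ1 : ∑ s, μ s = 1)
    (D : Matrix (Fin n) (Fin n) ℝ) (hD : D = Matrix.diagonal μ)
    (Proj : Matrix (Fin n) (Fin n) ℝ)
    (hProj : Proj = Φ * (Φᵀ * D * Φ)⁻¹ * Φᵀ * D)
    -- contraction mapping condition
    (hF : (Matrix.fromBlocks (Φᵀ * D * Φ) (Φᵀ * D * P * Φ)
        (Φᵀ * Pᵀ * D * Φ) (Φᵀ * D * Φ)).PosSemidef)
    -- ν is a stationary distribution of P with full support
    (ν : Fin n → ℝ) (hν0 : ∀ s, 0 < ν s) (hν1 : ∑ s, ν s = 1)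
    (hstat : ∀ s', ∑ s, ν s * P s s' = ν s')
    -- V is the (unique) solution of the Bellman equation
    (V : Fin n → ℝ) (hV : V = R + γ • P.mulVec V)
    -- w⋆ satisfies the projected fixed-point equation
    (w : Fin k → ℝ)
    (hw : Φ.mulVec w = Proj.mulVec (R + γ • P.mulVec (Φ.mulVec w)))
    -- δ(ν, μ) is the maximum of (ν s / μ s) · (μ s̃ / ν s̃) over pairs of states
    (δ : ℝ)
    (hδ : IsGreatest {d : ℝ | ∃ s t : Fin n, d = ν s / μ s * (μ t / ν t)} δ) :
    wnorm μ (Φ.mulVec w - V)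
      ≤ ((1 + γ * Real.sqrt δ) / (1 - γ)) * wnorm μ (Proj.mulVec V - V) := by
  classical
  obtain ⟨s0, t0, hδval⟩ := hδ.1
  have hμ' : ∀ s, 0 ≤ μ s := fun s => (hμ0 s).le
  have hδpos : 0 < δ := by
    rw [hδval]
    have := hν0 s0; have := hμ0 s0; have := hν0 t0; have := hμ0 t0
    positivity
  have hsδ : (0:ℝ) ≤ Real.sqrt δ := Real.sqrt_nonneg δ
  have h1γ : (0:ℝ) < 1 - γ := by linarith
  set A := Φᵀ * D * Φ with hA_def
  -- A is invertible
  have hdet : A.det ≠ 0 := by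
    intro hd
    obtain ⟨v, hv0, hv⟩ := Matrix.exists_mulVec_eq_zero_iff.mpr hd
    have h2 : v ⬝ᵥ (A *ᵥ v) = wip μ (Φ *ᵥ v) (Φ *ᵥ v) := by
      rw [hA_def, hD, show Φᵀ * Matrix.diagonal μ * Φ = Φᵀ * (Matrix.diagonal μ * Φ) from
        Matrix.mul_assoc _ _ _, ← Matrix.mulVec_mulVec, ← Matrix.mulVec_mulVec,
        ← dot_swap, wip_eq_dot]
    have h1 : wip μ (Φ *ᵥ v) (Φ *ᵥ v) = 0 := by rw [← h2, hv, dotProduct_zero]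
    have h3 : ∀ s ∈ Finset.univ, μ s * (Φ *ᵥ v) s * (Φ *ᵥ v) s = 0 := by
      rw [← Finset.sum_eq_zero_iff_of_nonneg]
      · exact h1
      · intro s _
        nlinarith [hμ' s, sq_nonneg ((Φ *ᵥ v) s)]
    have h4 : Φ *ᵥ v = 0 := by
      funext s
      have hs := h3 s (Finset.mem_univ s)
      have := hμ0 s
      have : (Φ *ᵥ v) s * (Φ *ᵥ v) s = 0 := by
        by_contra hne
        exact hne (by nlinarith)
      simpa using mul_self_eq_zero.mp this
    exact hv0 (hΦ (by rw [h4, Matrix.mulVec_zero]))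
  have hAunit : IsUnit A.det := isUnit_iff_ne_zero.mpr hdet
  -- projection fixes the range of Φ
  have hPF : Proj * Φ = Φ := by
    have h1 : Proj * Φ = Φ * (A⁻¹ * A) := by
      rw [hProj, hA_def]; simp only [Matrix.mul_assoc]
    rw [h1, Matrix.nonsing_inv_mul A hAunit, Matrix.mul_one]
  have hProjRange : ∀ u : Fin k → ℝ, Proj *ᵥ (Φ *ᵥ u) = Φ *ᵥ u := fun u => by
    rw [Matrix.mulVec_mulVec, hPF]
  have hPVrange : Proj *ᵥ V = Φ *ᵥ ((A⁻¹ * Φᵀ * D) *ᵥ V) := by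
    rw [Matrix.mulVec_mulVec]
    congr 1
    rw [hProj, hA_def]
    simp only [Matrix.mul_assoc]
  -- Proj is self-adjoint for wip
  have hAT : Aᵀ = A := by
    rw [hA_def, hD]
    simp only [Matrix.transpose_mul, Matrix.diagonal_transpose, Matrix.transpose_transpose,
      Matrix.mul_assoc]
  have hsymm : Projᵀ * D = D * Proj := by
    rw [hProj, hD]
    simp only [Matrix.transpose_mul, Matrix.transpose_nonsing_inv, Matrix.diagonal_transpose,
      Matrix.transpose_transpose, Matrix.mul_assoc, hAT]
  have hselfadj : ∀ x y, wip μ (Proj *ᵥ x) y = wip μ x (Proj *ᵥ y) := by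
    intro x y
    rw [wip_eq_dot, wip_eq_dot, dot_swap, ← hD, Matrix.mulVec_mulVec, Matrix.mulVec_mulVec,
      hsymm]
  -- consequence of the PSD hypothesis
  have hFcons : ∀ u : Fin k → ℝ,
      wip μ (Φ *ᵥ u) (P *ᵥ (Φ *ᵥ u)) ≤ wip μ (Φ *ᵥ u) (Φ *ᵥ u) := by
    intro u
    have h := hF.dotProduct_mulVec_nonneg (Sum.elim u (-u))
    rw [Matrix.fromBlocks_mulVec] at h
    simp only [star_trivial, Sum.elim_comp_inl, Sum.elim_comp_inr,
      sumElim_dotProduct_sumElim, Matrix.mulVec_neg, dotProduct_add,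
      dotProduct_neg, neg_dotProduct] at h
    -- h : 0 ≤ u⬝ᵥ(A u) + -(u ⬝ᵥ B u) + -(... )
    have tA : u ⬝ᵥ (A *ᵥ u) = wip μ (Φ *ᵥ u) (Φ *ᵥ u) := by
      rw [hA_def, hD, show Φᵀ * Matrix.diagonal μ * Φ = Φᵀ * (Matrix.diagonal μ * Φ) from
        Matrix.mul_assoc _ _ _, ← Matrix.mulVec_mulVec, ← Matrix.mulVec_mulVec,
        ← dot_swap, wip_eq_dot]
    have tB : u ⬝ᵥ ((Φᵀ * D * P * Φ) *ᵥ u) = wip μ (Φ *ᵥ u) (P *ᵥ (Φ *ᵥ u)) := by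
      rw [hD, show Φᵀ * Matrix.diagonal μ * P * Φ = Φᵀ * (Matrix.diagonal μ * (P * Φ)) from by
        simp only [Matrix.mul_assoc], ← Matrix.mulVec_mulVec, ← Matrix.mulVec_mulVec,
        ← Matrix.mulVec_mulVec, ← dot_swap, wip_eq_dot]
    have tC : u ⬝ᵥ ((Φᵀ * Pᵀ * D * Φ) *ᵥ u) = wip μ (Φ *ᵥ u) (P *ᵥ (Φ *ᵥ u)) := by
      rw [hD, show Φᵀ * Pᵀ * Matrix.diagonal μ * Φ = Φᵀ * (Pᵀ * (Matrix.diagonal μ * Φ)) from by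
        simp only [Matrix.mul_assoc], ← Matrix.mulVec_mulVec, ← Matrix.mulVec_mulVec,
        ← Matrix.mulVec_mulVec, ← dot_swap, ← dot_swap, wip_comm, wip_eq_dot]
    rw [tA, tB, tC] at h
    linarith
  -- the weighted norm expansion bound for P
  have hμP : ∀ t, ∑ s, μ s * P s t ≤ δ * μ t := by
    obtain ⟨sm, -, hsm⟩ := Finset.exists_max_image Finset.univ (fun s => μ s / ν s)
      ⟨s0, Finset.mem_univ s0⟩
    intro t
    have hsm' : ∀ s, μ s ≤ μ sm / ν sm * ν s := by
      intro s
      have h := hsm s (Finset.mem_univ s)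
      rw [div_le_div_iff₀ (hν0 s) (hν0 sm)] at h
      rw [div_mul_eq_mul_div, le_div_iff₀ (hν0 sm)]
      linarith
    have h1 : ∑ s, μ s * P s t ≤ μ sm / ν sm * ν t := by
      calc ∑ s, μ s * P s t ≤ ∑ s, μ sm / ν sm * ν s * P s t :=
            Finset.sum_le_sum fun s _ => mul_le_mul_of_nonneg_right (hsm' s) (hP0 s t)
        _ = μ sm / ν sm * ∑ s, ν s * P s t := by
            rw [Finset.mul_sum]
            exact Finset.sum_congr rfl fun s _ => by ring
        _ = μ sm / ν sm * ν t := by rw [hstat t]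
    have h2 : μ sm / ν sm * ν t ≤ δ * μ t := by
      have hle := hδ.2 ⟨t, sm, rfl⟩
      have heq : μ sm / ν sm * ν t = (ν t / μ t * (μ sm / ν sm)) * μ t := by
        have h₁ : μ t ≠ 0 := (hμ0 t).ne'
        have h₂ : ν sm ≠ 0 := (hν0 sm).ne'
        field_simp
      rw [heq]
      exact mul_le_mul_of_nonneg_right hle (hμ' t)
    linarith
  have hPnorm : ∀ z, wnorm μ (P *ᵥ z) ≤ Real.sqrt δ * wnorm μ z := by
    intro z
    have h1 : ∀ s, (P *ᵥ z) s ^ 2 ≤ ∑ t, P s t * z t ^ 2 := by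
      intro s
      have hcs := Finset.sum_mul_sq_le_sq_mul_sq Finset.univ
        (fun t => Real.sqrt (P s t)) (fun t => Real.sqrt (P s t) * z t)
      have e1 : ∀ t, Real.sqrt (P s t) * (Real.sqrt (P s t) * z t) = P s t * z t := fun t => by
        rw [← mul_assoc, Real.mul_self_sqrt (hP0 s t)]
      have e2 : ∀ t, Real.sqrt (P s t) ^ 2 = P s t := fun t => Real.sq_sqrt (hP0 s t)
      have e3 : ∀ t, (Real.sqrt (P s t) * z t) ^ 2 = P s t * z t ^ 2 := fun t => by
        rw [mul_pow, Real.sq_sqrt (hP0 s t)]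
      rw [Finset.sum_congr rfl (fun t _ => e1 t), Finset.sum_congr rfl (fun t _ => e2 t),
        Finset.sum_congr rfl (fun t _ => e3 t), hP1 s, one_mul] at hcs
      have hmv : (P *ᵥ z) s = ∑ t, P s t * z t := rfl
      rw [hmv]
      exact hcs
    have h2 : wip μ (P *ᵥ z) (P *ᵥ z) ≤ δ * wip μ z z := by
      calc wip μ (P *ᵥ z) (P *ᵥ z) = ∑ s, μ s * (P *ᵥ z) s ^ 2 :=
            Finset.sum_congr rfl fun s _ => by ring
        _ ≤ ∑ s, μ s * ∑ t, P s t * z t ^ 2 :=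
            Finset.sum_le_sum fun s _ => mul_le_mul_of_nonneg_left (h1 s) (hμ' s)
        _ = ∑ t, (∑ s, μ s * P s t) * z t ^ 2 := by
            simp_rw [Finset.mul_sum]
            rw [Finset.sum_comm]
            exact Finset.sum_congr rfl fun t _ => by
              rw [Finset.sum_mul]
              exact Finset.sum_congr rfl fun s _ => by ring
        _ ≤ ∑ t, (δ * μ t) * z t ^ 2 :=
            Finset.sum_le_sum fun t _ =>
              mul_le_mul_of_nonneg_right (hμP t) (sq_nonneg _)
        _ = δ * wip μ z z := by
            unfold wip
            rw [Finset.mul_sum]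
            exact Finset.sum_congr rfl fun t _ => by ring
    rw [wnorm_eq_sqrt_wip, wnorm_eq_sqrt_wip]
    calc Real.sqrt (wip μ (P *ᵥ z) (P *ᵥ z)) ≤ Real.sqrt (δ * wip μ z z) :=
          Real.sqrt_le_sqrt h2
      _ = Real.sqrt δ * Real.sqrt (wip μ z z) := Real.sqrt_mul hδpos.le _
  -- main argument
  set ε := Proj *ᵥ V - V with hε_def
  set e := Φ *ᵥ w - Proj *ᵥ V with he_def
  have hrange : e = Φ *ᵥ (w - (A⁻¹ * Φᵀ * D) *ᵥ V) := by
    rw [Matrix.mulVec_sub, ← hPVrange]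
  have hProjE : Proj *ᵥ e = e := by rw [hrange]; exact hProjRange _
  have hee : e + ε = Φ *ᵥ w - V := sub_add_sub_cancel _ _ _
  have hPjV : Proj *ᵥ V = Proj *ᵥ R + γ • (Proj *ᵥ (P *ᵥ V)) := by
    conv_lhs => rw [hV]
    rw [Matrix.mulVec_add, Matrix.mulVec_smul]
  have hΦw : Φ *ᵥ w = Proj *ᵥ R + γ • (Proj *ᵥ (P *ᵥ (Φ *ᵥ w))) := by
    conv_lhs => rw [hw]
    rw [Matrix.mulVec_add, Matrix.mulVec_smul]
  have key : e = γ • (Proj *ᵥ (P *ᵥ (e + ε))) := by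
    rw [hee]
    calc e = (Proj *ᵥ R + γ • (Proj *ᵥ (P *ᵥ (Φ *ᵥ w))))
            - (Proj *ᵥ R + γ • (Proj *ᵥ (P *ᵥ V))) := by rw [← hΦw, ← hPjV]
      _ = γ • (Proj *ᵥ (P *ᵥ (Φ *ᵥ w - V))) := by
          rw [Matrix.mulVec_sub, Matrix.mulVec_sub, smul_sub]
          abel
  have hipe : wip μ e e = γ * wip μ e (P *ᵥ (e + ε)) := by
    calc wip μ e e = wip μ e (γ • (Proj *ᵥ (P *ᵥ (e + ε)))) := by rw [← key]
      _ = γ * wip μ e (Proj *ᵥ (P *ᵥ (e + ε))) := wip_smul_right _ _ _ _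
      _ = γ * wip μ (Proj *ᵥ e) (P *ᵥ (e + ε)) := by rw [hselfadj]
      _ = γ * wip μ e (P *ᵥ (e + ε)) := by rw [hProjE]
  set a := wnorm μ e with ha_def
  set b := wnorm μ ε with hb_def
  have ha : 0 ≤ a := wnorm_nonneg μ e
  have hb : 0 ≤ b := wnorm_nonneg μ ε
  have hwa : wip μ e e = a ^ 2 := (sq_wnorm hμ' e).symm
  have hstep : wip μ e (P *ᵥ (e + ε)) ≤ a ^ 2 + Real.sqrt δ * (a * b) := by
    rw [Matrix.mulVec_add, wip_add_right]
    have t1 : wip μ e (P *ᵥ e) ≤ a ^ 2 := by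
      rw [← hwa, hrange]; exact hFcons _
    have t2 : wip μ e (P *ᵥ ε) ≤ a * wnorm μ (P *ᵥ ε) := wip_le hμ' _ _
    have t3 : wnorm μ (P *ᵥ ε) ≤ Real.sqrt δ * b := hPnorm ε
    have t4 : a * wnorm μ (P *ᵥ ε) ≤ a * (Real.sqrt δ * b) :=
      mul_le_mul_of_nonneg_left t3 ha
    have t5 : a * (Real.sqrt δ * b) = Real.sqrt δ * (a * b) := by ring
    linarith
  have habound : a ≤ γ * Real.sqrt δ / (1 - γ) * b := by
    have h1 : a ^ 2 ≤ γ * (a ^ 2 + Real.sqrt δ * (a * b)) := by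
      calc a ^ 2 = wip μ e e := hwa.symm
        _ = γ * wip μ e (P *ᵥ (e + ε)) := hipe
        _ ≤ γ * (a ^ 2 + Real.sqrt δ * (a * b)) :=
            mul_le_mul_of_nonneg_left hstep hγ0.le
    rcases eq_or_lt_of_le ha with h0 | h0
    · rw [← h0]
      positivity
    · have h2 : (1 - γ) * a ≤ γ * Real.sqrt δ * b := by
        have h3 : ((1 - γ) * a) * a ≤ (γ * Real.sqrt δ * b) * a := by nlinarith
        exact le_of_mul_le_mul_right h3 h0
      rw [div_mul_eq_mul_div, le_div_iff₀ h1γ]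
      linarith
  have htri : wnorm μ (Φ *ᵥ w - V) ≤ a + b := by
    rw [← hee]; exact wnorm_add_le hμ' e ε
  have hfinal : a + b ≤ (1 + γ * Real.sqrt δ) / (1 - γ) * b := by
    have hgap : (1 + γ * Real.sqrt δ) / (1 - γ) * b
        - (γ * Real.sqrt δ / (1 - γ) * b + b) = γ * Real.sqrt δ * b * (γ / (1 - γ))
          + γ * b / (1 - γ) - γ * Real.sqrt δ * b * (γ / (1 - γ)) := by
      field_simp
      ring
    have hpos : 0 ≤ γ * b / (1 - γ) := by positivity
    linarith [habound]
  calc wnorm μ (Φ *ᵥ w - V) ≤ a + b := htri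
    _ ≤ (1 + γ * Real.sqrt δ) / (1 - γ) * b := hfinal
end
end

section
/- (On-policy feasibility of the contraction mapping condition.) Let P ∈ ℝ^{n×n} be row-stochastic, let ν be a stationary distribution of P (νᵀP = νᵀ) with ν(s) > 0 for all s, let D_ν = diag(ν), and let Φ ∈ ℝ^{n×k} be any feature matrix. Then the block matrix [[ΦᵀD_νΦ, ΦᵀD_νPΦ], [ΦᵀPᵀD_νΦ, ΦᵀD_νΦ]] is positive semidefinite; equivalently, the stationary distribution ν satisfies the contraction mapping condition E_{s∼ν}[F(s)] ⪰ 0 with F(s) = E_{s'∼P(s,·)} [[φ(s)φ(s)ᵀ, φ(s)φ(s')ᵀ], [φ(s')φ(s)ᵀ, φ(s)φ(s)ᵀ]], where φ(s)ᵀ is the s-th row of Φ. -/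
open Matrix

noncomputable section

/-- on-policy feasibility of the contraction mapping condition:
for a stationary distribution ν of a row-stochastic matrix P with full support,
the block matrix `[[ΦᵀD_νΦ, ΦᵀD_νPΦ], [ΦᵀPᵀD_νΦ, ΦᵀD_νΦ]]` is positive semidefinite;
equivalently, `E_{s∼ν}[F(s)] ⪰ 0`. -/
theorem stmt11 (n k : ℕ)
    (P : Matrix (Fin n) (Fin n) ℝ)
    (hP0 : ∀ i j, 0 ≤ P i j) (hP1 : ∀ i, ∑ j, P i j = 1)
    (ν : Fin n → ℝ) (hν0 : ∀ s, 0 < ν s) (hν1 : ∑ s, ν s = 1)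
    (hstat : ∀ s', ∑ s, ν s * P s s' = ν s')
    (Φ : Matrix (Fin n) (Fin k) ℝ)
    (D : Matrix (Fin n) (Fin n) ℝ) (hD : D = Matrix.diagonal ν)
    (F : Fin n → Matrix (Fin k ⊕ Fin k) (Fin k ⊕ Fin k) ℝ)
    (hF : ∀ s, F s = ∑ s', P s s' •
        Matrix.fromBlocks (vecMulVec (Φ s) (Φ s)) (vecMulVec (Φ s) (Φ s'))
          (vecMulVec (Φ s') (Φ s)) (vecMulVec (Φ s) (Φ s))) :
    (Matrix.fromBlocks (Φᵀ * D * Φ) (Φᵀ * D * P * Φ)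
        (Φᵀ * Pᵀ * D * Φ) (Φᵀ * D * Φ)).PosSemidef
      ∧ (∑ s, ν s • F s).PosSemidef := by
  -- L : rows indexed by pairs (s, s'), row = (φ(s), φ(s'))
  set L : Matrix (Fin n × Fin n) (Fin k ⊕ Fin k) ℝ :=
    fun p q => Sum.elim (Φ p.1) (Φ p.2) q with hL
  set W : Matrix (Fin n × Fin n) (Fin n × Fin n) ℝ :=
    Matrix.diagonal (fun p : Fin n × Fin n => ν p.1 * P p.1 p.2) with hW
  have hWpsd : W.PosSemidef := by
    refine Matrix.posSemidef_diagonal_iff.mpr fun p => ?_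
    exact mul_nonneg (hν0 p.1).le (hP0 p.1 p.2)
  have hpsd : (Lᴴ * W * L).PosSemidef := hWpsd.conjTranspose_mul_mul_same L
  have hentry : ∀ a b, (Lᴴ * W * L) a b =
      ∑ s, ∑ s', L (s, s') a * (ν s * P s s') * L (s, s') b := by
    intro a b
    simp only [Matrix.mul_apply, Matrix.conjTranspose_apply, hW, Matrix.diagonal_apply,
      star_trivial]
    rw [Fintype.sum_prod_type]
    refine Finset.sum_congr rfl fun s _ => Finset.sum_congr rfl fun s' _ => ?_
    rw [Finset.sum_eq_single (s, s')]
    · simp only [if_true]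
    · intro p _ hp; simp [hp]
    · simp
  -- generic entry formula for Φᵀ M Φ
  have hgen : ∀ (M : Matrix (Fin n) (Fin n) ℝ) (i j : Fin k),
      (Φᵀ * M * Φ) i j = ∑ s, ∑ s', Φ s i * M s s' * Φ s' j := by
    intro M i j
    rw [Matrix.mul_assoc]
    simp only [Matrix.mul_apply, Matrix.transpose_apply, Finset.mul_sum]
    exact Finset.sum_congr rfl fun s _ => Finset.sum_congr rfl fun s' _ => by ring
  have hAA : ∀ i j, (Φᵀ * D * Φ) i j = ∑ s, Φ s i * ν s * Φ s j := by
    intro i j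
    rw [hD, hgen]
    refine Finset.sum_congr rfl fun s _ => ?_
    rw [Finset.sum_eq_single s]
    · simp [Matrix.diagonal_apply_eq]
    · intro t _ ht; simp [Matrix.diagonal_apply_ne' ν ht]
    · simp
  have hM : Matrix.fromBlocks (Φᵀ * D * Φ) (Φᵀ * D * P * Φ)
      (Φᵀ * Pᵀ * D * Φ) (Φᵀ * D * Φ) = Lᴴ * W * L := by
    ext a b
    rw [hentry]
    cases a with
    | inl i => cases b with
      | inl j =>
        rw [Matrix.fromBlocks_apply₁₁, hAA]
        simp only [hL, Sum.elim_inl]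
        refine Finset.sum_congr rfl fun s _ => ?_
        have : ∑ s', Φ s i * (ν s * P s s') * Φ s j
            = (Φ s i * ν s * Φ s j) * ∑ s', P s s' := by
          rw [Finset.mul_sum]; exact Finset.sum_congr rfl fun s' _ => by ring
        rw [this, hP1, mul_one]
      | inr j =>
        rw [Matrix.fromBlocks_apply₁₂, Matrix.mul_assoc Φᵀ D P, hD, hgen]
        simp only [hL, Sum.elim_inl, Sum.elim_inr, Matrix.diagonal_mul]
    | inr i => cases b with
      | inl j =>
        rw [Matrix.fromBlocks_apply₂₁, Matrix.mul_assoc Φᵀ Pᵀ D, hD, hgen]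
        simp only [hL, Sum.elim_inl, Sum.elim_inr, Matrix.mul_diagonal,
          Matrix.transpose_apply]
        rw [Finset.sum_comm]
        exact Finset.sum_congr rfl fun s _ => Finset.sum_congr rfl fun s' _ => by ring
      | inr j =>
        rw [Matrix.fromBlocks_apply₂₂, hAA]
        simp only [hL, Sum.elim_inr]
        calc ∑ s, Φ s i * ν s * Φ s j
            = ∑ s', (Φ s' i * Φ s' j) * ∑ s, ν s * P s s' := by
              refine Finset.sum_congr rfl fun s' _ => ?_
              rw [hstat]; ring
          _ = ∑ s', ∑ s, Φ s' i * (ν s * P s s') * Φ s' j := by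
              refine Finset.sum_congr rfl fun s' _ => ?_
              rw [Finset.mul_sum]
              exact Finset.sum_congr rfl fun s _ => by ring
          _ = ∑ s, ∑ s', Φ s' i * (ν s * P s s') * Φ s' j := Finset.sum_comm
  have hF' : (∑ s, ν s • F s) = Lᴴ * W * L := by
    ext a b
    rw [hentry]
    simp only [Matrix.sum_apply, Matrix.smul_apply, hF, smul_eq_mul, Finset.mul_sum]
    cases a with
    | inl i => cases b with
      | inl j =>
        refine Finset.sum_congr rfl fun s _ => Finset.sum_congr rfl fun s' _ => ?_
        simp only [hL, Matrix.fromBlocks_apply₁₁, Matrix.vecMulVec_apply, Sum.elim_inl]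
        ring
      | inr j =>
        refine Finset.sum_congr rfl fun s _ => Finset.sum_congr rfl fun s' _ => ?_
        simp only [hL, Matrix.fromBlocks_apply₁₂, Matrix.vecMulVec_apply, Sum.elim_inl,
          Sum.elim_inr]
        ring
    | inr i => cases b with
      | inl j =>
        refine Finset.sum_congr rfl fun s _ => Finset.sum_congr rfl fun s' _ => ?_
        simp only [hL, Matrix.fromBlocks_apply₂₁, Matrix.vecMulVec_apply, Sum.elim_inl,
          Sum.elim_inr]
        ring
      | inr j =>
        simp only [hL, Matrix.fromBlocks_apply₂₂, Matrix.vecMulVec_apply, Sum.elim_inr]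
        calc ∑ s, ∑ s', ν s * (P s s' * (Φ s i * Φ s j))
            = ∑ s, ν s * Φ s i * Φ s j := by
              refine Finset.sum_congr rfl fun s _ => ?_
              have : ∑ s', ν s * (P s s' * (Φ s i * Φ s j))
                  = ν s * Φ s i * Φ s j * ∑ s', P s s' := by
                rw [Finset.mul_sum]; exact Finset.sum_congr rfl fun s' _ => by ring
              rw [this, hP1, mul_one]
          _ = ∑ s', ∑ s, Φ s' i * (ν s * P s s') * Φ s' j := by
              refine Finset.sum_congr rfl fun s' _ => ?_
              have : ∑ s, Φ s' i * (ν s * P s s') * Φ s' j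
                  = (Φ s' i * Φ s' j) * ∑ s, ν s * P s s' := by
                rw [Finset.mul_sum]; exact Finset.sum_congr rfl fun s _ => by ring
              rw [this, hstat]; ring
          _ = ∑ s, ∑ s', Φ s' i * (ν s * P s s') * Φ s' j := Finset.sum_comm
  exact ⟨hM ▸ hpsd, hF' ▸ hpsd⟩
end
end
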